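/- Assume the set-valued map K satisfies (H1) and (H2). Then for every N ∈ ℕ, every choice of weights m_i > 0 with Σ_{i=1}^N m_i = 1, and every initial datum (X_i⁰, V_i⁰)_{i=1}^N in (ℝ^d × ℝ^d)^N, there exist locally absolutely continuous curves X_i, V_i : [0,∞) → ℝ^d with X_i(0) = X_i⁰, V_i(0) = V_i⁰, such that for almost every t ≥ 0: X_i'(t) = V_i(t) and V_i'(t) ∈ { Σ_{j≠i} α_{ij} m_j (V_j(t) − V_i(t)) : α_{ij} ∈ 𝒜(X_i(t) − X_j(t), V_i(t)) } for every i; i.e. the N-particle differential inclusion has a global-in-time solution. -/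

import Mathlib

open MeasureTheory Metric Set Filter Pointwise
noncomputable section

abbrev E (d : ℕ) : Type := EuclideanSpace ℝ (Fin d)

def admissibleSlopes {d : ℕ} (K : E d → Set (E d)) (x v : E d) : Set ℝ :=
  convexHull ℝ {α : ℝ | α ∈ Set.Icc (0:ℝ) 1 ∧
    ∃ z : ℕ → E d × E d, Tendsto z atTop (nhds (x, v)) ∧
      Tendsto (fun n => Set.indicator (K (z n).2) (fun _ => (1:ℝ)) (z n).1) atTop (nhds α)}

namespace Stmt3Aux

variable {d : ℕ}

/-- real-valued indicator -/
def ind (S : Set (E d)) (x : E d) : ℝ := Set.indicator S (fun _ => (1:ℝ)) x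

lemma ind_eq_zero_or_one (S : Set (E d)) (x : E d) : ind S x = 0 ∨ ind S x = 1 := by
  by_cases h : x ∈ S
  · right; simp [ind, h]
  · left; simp [ind, h]

lemma ind_mem_Icc (S : Set (E d)) (x : E d) : ind S x ∈ Set.Icc (0:ℝ) 1 := by
  rcases ind_eq_zero_or_one S x with h | h <;> rw [h] <;> constructor <;> norm_num

/-- the pre-convexification set of admissible slopes -/
def pre (K : E d → Set (E d)) (x v : E d) : Set ℝ :=
  {α : ℝ | α ∈ Set.Icc (0:ℝ) 1 ∧
    ∃ z : ℕ → E d × E d, Tendsto z atTop (nhds (x, v)) ∧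
      Tendsto (fun n => ind (K (z n).2) (z n).1) atTop (nhds α)}

lemma admissibleSlopes_eq (K : E d → Set (E d)) (x v : E d) :
    admissibleSlopes K x v = convexHull ℝ (pre K x v) := rfl

variable {K : E d → Set (E d)} {x v : E d}

lemma pre_subset_Icc : pre K x v ⊆ Set.Icc (0:ℝ) 1 := fun _ h => h.1

lemma ind_mem_pre : ind (K v) x ∈ pre K x v := by
  refine ⟨ind_mem_Icc _ _, fun _ => (x, v), tendsto_const_nhds, tendsto_const_nhds⟩

lemma pre_nonempty : (pre K x v).Nonempty := ⟨_, ind_mem_pre⟩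

lemma pre_isClosed : IsClosed (pre K x v) := by
  refine IsSeqClosed.isClosed ?_
  intro α αl hα hαl
  constructor
  · exact isClosed_Icc.isSeqClosed (fun k => (hα k).1) hαl
  · -- diagonal argument
    have key : ∀ k : ℕ, ∃ p : E d × E d,
        dist p (x, v) ≤ (1:ℝ)/(k+1) ∧ dist (ind (K p.2) p.1) (α k) ≤ (1:ℝ)/(k+1) := by
      intro k
      obtain ⟨hIcc, z, hz, hzi⟩ := hα k
      have h1 : ∀ᶠ n in atTop, dist (z n) (x, v) ≤ (1:ℝ)/(k+1) :=
        hz (Metric.closedBall_mem_nhds _ (by positivity))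
      have h2 : ∀ᶠ n in atTop, dist (ind (K (z n).2) (z n).1) (α k) ≤ (1:ℝ)/(k+1) :=
        hzi (Metric.closedBall_mem_nhds _ (by positivity))
      obtain ⟨n, hn1, hn2⟩ := (h1.and h2).exists
      exact ⟨z n, hn1, hn2⟩
    choose p hp1 hp2 using key
    refine ⟨p, ?_, ?_⟩
    · rw [tendsto_iff_dist_tendsto_zero]
      refine squeeze_zero (fun k => dist_nonneg) hp1 ?_
      exact tendsto_one_div_add_atTop_nhds_zero_nat
    · rw [tendsto_iff_dist_tendsto_zero]
      have hb : ∀ k, dist (ind (K (p k).2) (p k).1) αl ≤ (1:ℝ)/(k+1) + dist (α k) αl :=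
        fun k => (dist_triangle _ (α k) αl).trans (by gcongr; exact hp2 k)
      refine squeeze_zero (fun k => dist_nonneg) hb ?_
      have := tendsto_one_div_add_atTop_nhds_zero_nat.add
        (tendsto_iff_dist_tendsto_zero.1 hαl)
      simpa using this

lemma pre_isCompact : IsCompact (pre K x v) :=
  isCompact_Icc.of_isClosed_subset pre_isClosed pre_subset_Icc

/-- lower endpoint -/
def alo (K : E d → Set (E d)) (x v : E d) : ℝ := sInf (pre K x v)
/-- upper endpoint -/
def ahi (K : E d → Set (E d)) (x v : E d) : ℝ := sSup (pre K x v)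

lemma alo_mem : alo K x v ∈ pre K x v := pre_isCompact.sInf_mem pre_nonempty
lemma ahi_mem : ahi K x v ∈ pre K x v := pre_isCompact.sSup_mem pre_nonempty
lemma alo_le_ahi : alo K x v ≤ ahi K x v :=
  csInf_le_csSup pre_nonempty pre_isCompact.bddBelow pre_isCompact.bddAbove

lemma admissibleSlopes_eq_Icc :
    admissibleSlopes K x v = Set.Icc (alo K x v) (ahi K x v) := by
  rw [admissibleSlopes_eq]
  apply le_antisymm
  · refine convexHull_min ?_ (convex_Icc _ _)
    intro a ha
    exact ⟨csInf_le pre_isCompact.bddBelow ha, le_csSup pre_isCompact.bddAbove ha⟩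
  · rw [← segment_eq_Icc alo_le_ahi]
    exact (convex_convexHull ℝ _).segment_subset
      (subset_convexHull ℝ _ alo_mem) (subset_convexHull ℝ _ ahi_mem)

lemma pre_subset_admissibleSlopes : pre K x v ⊆ admissibleSlopes K x v :=
  subset_convexHull ℝ _

lemma admissibleSlopes_nonempty : (admissibleSlopes K x v).Nonempty :=
  ⟨_, pre_subset_admissibleSlopes ind_mem_pre⟩

/-- the maximizer of `α ↦ α * c` over the admissible slopes -/
def amax (K : E d → Set (E d)) (x v : E d) (c : ℝ) : ℝ :=
  if 0 ≤ c then ahi K x v else alo K x v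

lemma amax_mem (c : ℝ) : amax K x v c ∈ admissibleSlopes K x v := by
  unfold amax; split_ifs
  · exact pre_subset_admissibleSlopes ahi_mem
  · exact pre_subset_admissibleSlopes alo_mem

lemma mul_le_amax {β c : ℝ} (hβ : β ∈ admissibleSlopes K x v) :
    β * c ≤ amax K x v c * c := by
  rw [admissibleSlopes_eq_Icc] at hβ
  unfold amax; split_ifs with h
  · exact mul_le_mul_of_nonneg_right hβ.2 h
  · exact mul_le_mul_of_nonpos_right hβ.1 (le_of_not_ge h)

/-- Key upper-semicontinuity estimate: near `(x,v)` every indicator value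
beats at most the max over admissible slopes, up to `δ`. -/
lemma eventually_ind_mul_le (c : ℝ) {δ : ℝ} (hδ : 0 < δ) :
    ∀ᶠ p : E d × E d in nhds (x, v), ind (K p.2) p.1 * c ≤ amax K x v c * c + δ := by
  by_contra hcon
  rw [Filter.not_eventually] at hcon
  have key : ∀ k : ℕ, ∃ p : E d × E d, dist p (x, v) ≤ (1:ℝ)/(k+1) ∧
      ¬ (ind (K p.2) p.1 * c ≤ amax K x v c * c + δ) := by
    intro k
    have := hcon.and_eventually (Metric.closedBall_mem_nhds (α := E d × E d) (x, v)
      (show (0:ℝ) < 1/(k+1) by positivity))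
    obtain ⟨p, hp2, hp1⟩ := this.exists
    exact ⟨p, hp1, hp2⟩
  choose p hp1 hp2 using key
  -- indicator values are 0 or 1; one of the fibers is infinite
  have hfib : {k : ℕ | ind (K (p k).2) (p k).1 = 0}.Infinite ∨
      {k : ℕ | ind (K (p k).2) (p k).1 = 1}.Infinite := by
    by_contra hf
    push_neg at hf
    have : (Set.univ : Set ℕ).Finite := by
      refine Set.Finite.subset (hf.1.union hf.2) ?_
      intro k _
      rcases ind_eq_zero_or_one (K (p k).2) (p k).1 with h | h
      · exact Or.inl h
      · exact Or.inr h
    exact Set.infinite_univ this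
  -- extract a sequence with constant indicator value β
  obtain ⟨β, hT⟩ : ∃ β : ℝ, {k : ℕ | ind (K (p k).2) (p k).1 = β}.Infinite := by
    rcases hfib with h | h
    exacts [⟨0, h⟩, ⟨1, h⟩]
  set T := {k : ℕ | ind (K (p k).2) (p k).1 = β}
  have hemb := hT.natEmbedding
  set e : ℕ → ℕ := fun n => (hemb n : ℕ) with he
  have he_inj : Function.Injective e := fun a b h => hemb.injective (Subtype.ext h)
  have he_top : Tendsto e atTop atTop := by
    rw [← Nat.cofinite_eq_atTop]
    exact he_inj.tendsto_cofinite
  have he_mem : ∀ n, ind (K (p (e n)).2) (p (e n)).1 = β := fun n => (hemb n).2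
  -- β is an admissible slope
  have hβpre : β ∈ pre K x v := by
    have hβIcc : β ∈ Set.Icc (0:ℝ) 1 := by
      have := ind_mem_Icc (K (p (e 0)).2) (p (e 0)).1
      rwa [he_mem 0] at this
    refine ⟨hβIcc, fun n => p (e n), ?_, ?_⟩
    · rw [tendsto_iff_dist_tendsto_zero]
      refine squeeze_zero (fun k => dist_nonneg) (fun k => hp1 (e k)) ?_
      have : Tendsto (fun n : ℕ => (1:ℝ)/(n+1)) atTop (nhds 0) :=
        tendsto_one_div_add_atTop_nhds_zero_nat
      exact this.comp he_top
    · simp only [he_mem]; exact tendsto_const_nhds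
  -- contradiction
  have h1 : β * c ≤ amax K x v c * c := mul_le_amax (pre_subset_admissibleSlopes hβpre)
  have h2 := hp2 (e 0)
  rw [he_mem 0] at h2
  push_neg at h2
  linarith



/-! ## the Euler scheme -/

variable {N : ℕ}

/-- full state space -/
abbrev P (d N : ℕ) : Type := (Fin N → E d) × (Fin N → E d)

variable (K : E d → Set (E d)) (m : Fin N → ℝ) (X0 V0 : Fin N → E d)

/-- the (x', v') field with indicator weights -/
def Phi (p : P d N) : P d N :=
  (p.2, fun i => ∑ j ∈ Finset.univ.erase i,
    ((ind (K (p.2 i)) (p.1 i - p.1 j)) * m j) • (p.2 j - p.2 i))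

/-- time step -/
def tau (n : ℕ) : ℝ := (2:ℝ)⁻¹ ^ n

lemma tau_pos (n : ℕ) : 0 < tau n := pow_pos (by norm_num) n
lemma tau_le_one (n : ℕ) : tau n ≤ 1 := by
  unfold tau; exact pow_le_one₀ (by norm_num) (by norm_num)
lemma tau_tendsto : Tendsto tau atTop (nhds 0) := by
  unfold tau
  exact tendsto_pow_atTop_nhds_zero_of_lt_one (by norm_num) (by norm_num)

/-- grid states -/
def st (n : ℕ) : ℕ → P d N
  | 0 => (X0, V0)
  | (k+1) => st n k + tau n • Phi K m (st n k)

/-- grid state at real time -/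
def stp (n : ℕ) (s : ℝ) : P d N := st K m X0 V0 n (⌊s / tau n⌋).toNat

/-- interpolated curve -/
def uc (n : ℕ) (t : ℝ) : P d N :=
  (X0, V0) + ∫ s in (0:ℝ)..t, Phi K m (stp K m X0 V0 n s)

/-- velocity bound -/
def Rb (V0 : Fin N → E d) : ℝ := ∑ i, ‖V0 i‖

lemma Rb_nonneg : 0 ≤ Rb V0 := Finset.sum_nonneg fun _ _ => norm_nonneg _
lemma norm_V0_le_Rb (i : Fin N) : ‖V0 i‖ ≤ Rb V0 :=
  Finset.single_le_sum (fun j _ => norm_nonneg (V0 j)) (Finset.mem_univ i)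

variable {m}

section bounds
variable (hm : ∀ i, 0 < m i) (hsum : ∑ i, m i = 1)
include hm hsum

lemma sum_erase_le_one (i : Fin N) : ∑ j ∈ Finset.univ.erase i, m j ≤ 1 := by
  rw [← hsum]
  exact Finset.sum_le_sum_of_subset_of_nonneg (Finset.erase_subset _ _)
    (fun j _ _ => (hm j).le)

/-- one Euler step keeps velocities in the ball of radius `C` -/
lemma step_norm_le {p : P d N} {C : ℝ} (hC : ∀ j, ‖p.2 j‖ ≤ C) {τ : ℝ}
    (hτ0 : 0 ≤ τ) (hτ1 : τ ≤ 1) (i : Fin N) :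
    ‖p.2 i + τ • (Phi K m p).2 i‖ ≤ C := by
  have hCnn : 0 ≤ C := (norm_nonneg _).trans (hC i)
  set c : Fin N → ℝ := fun j => τ * (ind (K (p.2 i)) (p.1 i - p.1 j) * m j) with hc
  have hc0 : ∀ j, 0 ≤ c j := by
    intro j
    have h1 := (ind_mem_Icc (K (p.2 i)) (p.1 i - p.1 j)).1
    have h2 := (hm j).le
    exact mul_nonneg hτ0 (mul_nonneg h1 h2)
  have hcm : ∀ j, c j ≤ m j := by
    intro j
    have h1 := (ind_mem_Icc (K (p.2 i)) (p.1 i - p.1 j)).2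
    calc c j ≤ 1 * (1 * m j) := by
          refine mul_le_mul hτ1 ?_ (mul_nonneg (ind_mem_Icc _ _).1 (hm j).le) (by norm_num)
          exact mul_le_mul_of_nonneg_right h1 (hm j).le
      _ = m j := by ring
  have hc1 : ∑ j ∈ Finset.univ.erase i, c j ≤ 1 :=
    (Finset.sum_le_sum (fun j _ => hcm j)).trans (sum_erase_le_one hm hsum i)
  have hcs0 : 0 ≤ ∑ j ∈ Finset.univ.erase i, c j :=
    Finset.sum_nonneg (fun j _ => hc0 j)
  have expand : p.2 i + τ • (Phi K m p).2 i
      = (1 - ∑ j ∈ Finset.univ.erase i, c j) • p.2 i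
        + ∑ j ∈ Finset.univ.erase i, c j • p.2 j := by
    simp only [Phi, Finset.smul_sum, smul_smul]
    rw [sub_smul, one_smul]
    simp only [← hc, smul_sub]
    rw [Finset.sum_sub_distrib, ← Finset.sum_smul]
    abel
  rw [expand]
  calc ‖(1 - ∑ j ∈ Finset.univ.erase i, c j) • p.2 i
        + ∑ j ∈ Finset.univ.erase i, c j • p.2 j‖
      ≤ ‖(1 - ∑ j ∈ Finset.univ.erase i, c j) • p.2 i‖
        + ∑ j ∈ Finset.univ.erase i, ‖c j • p.2 j‖ :=
        (norm_add_le _ _).trans (by gcongr; exact norm_sum_le _ _)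
    _ ≤ (1 - ∑ j ∈ Finset.univ.erase i, c j) * C
        + ∑ j ∈ Finset.univ.erase i, c j * C := by
        gcongr with j hj
        · rw [norm_smul, Real.norm_eq_abs, abs_of_nonneg (by linarith)]
          exact mul_le_mul_of_nonneg_left (hC i) (by linarith)
        · rw [norm_smul, Real.norm_eq_abs, abs_of_nonneg (hc0 j)]
          exact mul_le_mul_of_nonneg_left (hC j) (hc0 j)
    _ = C := by rw [← Finset.sum_mul]; ring


/-- acceleration bound -/
lemma Phi_acc_norm_le {p : P d N} {C : ℝ} (hC : ∀ j, ‖p.2 j‖ ≤ C) (i : Fin N) :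
    ‖(Phi K m p).2 i‖ ≤ 2 * C := by
  have hC0 : 0 ≤ C := (norm_nonneg _).trans (hC i)
  have hPhi : (Phi K m p).2 i = ∑ j ∈ Finset.univ.erase i,
      ((ind (K (p.2 i)) (p.1 i - p.1 j)) * m j) • (p.2 j - p.2 i) := rfl
  rw [hPhi]
  calc ‖∑ j ∈ Finset.univ.erase i,
      ((ind (K (p.2 i)) (p.1 i - p.1 j)) * m j) • (p.2 j - p.2 i)‖
      ≤ ∑ j ∈ Finset.univ.erase i,
          ‖(ind (K (p.2 i)) (p.1 i - p.1 j) * m j) • (p.2 j - p.2 i)‖ := norm_sum_le _ _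
    _ ≤ ∑ j ∈ Finset.univ.erase i, m j * (2 * C) := by
        refine Finset.sum_le_sum fun j _ => ?_
        rw [norm_smul, Real.norm_eq_abs,
          abs_of_nonneg (mul_nonneg (ind_mem_Icc _ _).1 (hm j).le)]
        have h1 : ind (K (p.2 i)) (p.1 i - p.1 j) * m j ≤ m j := by
          have := (ind_mem_Icc (K (p.2 i)) (p.1 i - p.1 j)).2
          nlinarith [(hm j).le]
        have h2 : ‖p.2 j - p.2 i‖ ≤ 2 * C := by
          calc ‖p.2 j - p.2 i‖ ≤ ‖p.2 j‖ + ‖p.2 i‖ := norm_sub_le _ _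
            _ ≤ 2 * C := by linarith [hC i, hC j]
        exact mul_le_mul h1 h2 (norm_nonneg _)
          ((mul_nonneg (ind_mem_Icc _ _).1 (hm j).le).trans h1)
    _ ≤ 1 * (2 * C) := by
        rw [← Finset.sum_mul]
        exact mul_le_mul_of_nonneg_right (sum_erase_le_one hm hsum i) (by linarith)
    _ = 2 * C := one_mul _

/-- grid velocities stay bounded -/
lemma st_vel_norm_le (n k : ℕ) : ∀ i, ‖(st K m X0 V0 n k).2 i‖ ≤ Rb V0 := by
  induction k with
  | zero => exact fun i => norm_V0_le_Rb V0 i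
  | succ k ih =>
      intro i
      have : (st K m X0 V0 n (k+1)).2 i
          = (st K m X0 V0 n k).2 i + tau n • (Phi K m (st K m X0 V0 n k)).2 i := rfl
      rw [this]
      exact step_norm_le K hm hsum ih (tau_pos n).le (tau_le_one n) i

/-- global Lipschitz/norm constant -/
def Lb (V0 : Fin N → E d) : ℝ := 2 * Rb V0 + 1

omit hm hsum in
lemma Lb_pos : 0 < Lb V0 := by
  have := Rb_nonneg V0; unfold Lb; linarith

lemma norm_Phi_st_le (n k : ℕ) : ‖Phi K m (st K m X0 V0 n k)‖ ≤ Lb V0 := by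
  have h1 : ‖(Phi K m (st K m X0 V0 n k)).1‖ ≤ Rb V0 := by
    refine pi_norm_le_iff_of_nonneg (Rb_nonneg V0) |>.2 fun i => ?_
    exact st_vel_norm_le K X0 V0 hm hsum n k i
  have h2 : ‖(Phi K m (st K m X0 V0 n k)).2‖ ≤ 2 * Rb V0 := by
    refine pi_norm_le_iff_of_nonneg (by linarith [Rb_nonneg V0]) |>.2 fun i => ?_
    exact Phi_acc_norm_le K hm hsum (st_vel_norm_le K X0 V0 hm hsum n k) i
  rw [Prod.norm_def]
  have := Rb_nonneg V0
  refine max_le (h1.trans ?_) (h2.trans ?_) <;> unfold Lb <;> linarith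

lemma norm_step_le (n : ℕ) (s : ℝ) : ‖Phi K m (stp K m X0 V0 n s)‖ ≤ Lb V0 :=
  norm_Phi_st_le K X0 V0 hm hsum n _

end bounds

/-- measurability of the step function -/
lemma meas_step (n : ℕ) : Measurable (fun s => Phi K m (stp K m X0 V0 n s)) := by
  have h1 : Measurable (fun s : ℝ => ⌊s / tau n⌋) :=
    Int.measurable_floor.comp (measurable_id.div_const _)
  exact (measurable_from_top
    (f := fun z : ℤ => Phi K m (st K m X0 V0 n z.toNat))).comp h1

section bounds2
variable (hm : ∀ i, 0 < m i) (hsum : ∑ i, m i = 1)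
include hm hsum

lemma intInt_step (n : ℕ) (a b : ℝ) :
    IntervalIntegrable (fun s => Phi K m (stp K m X0 V0 n s)) volume a b := by
  rw [intervalIntegrable_iff]
  refine Integrable.mono' (g := fun _ => Lb V0)
    (integrableOn_const measure_Ioc_lt_top.ne)
    ((meas_step K X0 V0 n).aestronglyMeasurable.restrict)
    (ae_of_all _ fun s => norm_step_le K X0 V0 hm hsum n s)

lemma uc_sub (n : ℕ) (a b : ℝ) :
    uc K m X0 V0 n b - uc K m X0 V0 n a
      = ∫ s in a..b, Phi K m (stp K m X0 V0 n s) := by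
  unfold uc
  rw [add_sub_add_left_eq_sub]
  exact intervalIntegral.integral_interval_sub_left
    (intInt_step K X0 V0 hm hsum n 0 b) (intInt_step K X0 V0 hm hsum n 0 a)

omit hm hsum in
lemma uc_zero : uc K m X0 V0 n 0 = (X0, V0) := by
  unfold uc; rw [intervalIntegral.integral_same, add_zero]

lemma uc_lipschitz (n : ℕ) {a b : ℝ} :
    ‖uc K m X0 V0 n b - uc K m X0 V0 n a‖ ≤ Lb V0 * |b - a| := by
  rw [uc_sub K X0 V0 hm hsum n a b]
  exact intervalIntegral.norm_integral_le_of_norm_le_const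
    (fun s _ => norm_step_le K X0 V0 hm hsum n s)

/-- grid consistency -/
lemma uc_grid (n : ℕ) (k : ℕ) :
    uc K m X0 V0 n ((k : ℝ) * tau n) = st K m X0 V0 n k := by
  induction k with
  | zero => simpa [st] using uc_zero K X0 V0 (n := n)
  | succ k ih =>
      set τ := tau n with hτ
      set a : ℝ := (k : ℝ) * τ with ha
      set b : ℝ := ((k+1 : ℕ) : ℝ) * τ with hb
      have hτ0 := tau_pos n
      have hab : a ≤ b := by
        rw [ha, hb]; push_cast; nlinarith
      have key : ∫ s in a..b, Phi K m (stp K m X0 V0 n s)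
          = τ • Phi K m (st K m X0 V0 n k) := by
        have hae : ∀ᵐ s : ℝ ∂volume, s ∈ Set.uIoc a b →
            Phi K m (stp K m X0 V0 n s) = Phi K m (st K m X0 V0 n k) := by
          have h1 : ∀ᵐ s : ℝ ∂volume, s ≠ b := by
            refine ae_iff.2 ?_
            have he : {s : ℝ | ¬ s ≠ b} = {b} := by ext s; simp
            rw [he]
            exact measure_singleton _
          filter_upwards [h1] with s hs hmem
          rw [Set.uIoc_of_le hab] at hmem
          have hlt : s < b := lt_of_le_of_ne hmem.2 hs
          have hgt : a < s := hmem.1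
          have hfl : ⌊s / τ⌋ = (k : ℤ) := by
            rw [Int.floor_eq_iff]
            constructor
            · push_cast
              rw [le_div_iff₀ hτ0]
              rw [ha] at hgt; linarith
            · push_cast
              rw [div_lt_iff₀ hτ0]
              rw [hb] at hlt; push_cast at hlt; linarith
          unfold stp
          rw [← hτ, hfl]
          simp
        rw [intervalIntegral.integral_congr_ae hae, intervalIntegral.integral_const]
        congr 1
        rw [ha, hb]; push_cast; ring
      have hsub := uc_sub K X0 V0 hm hsum n a b
      calc uc K m X0 V0 n b
          = (∫ s in a..b, Phi K m (stp K m X0 V0 n s)) + uc K m X0 V0 n a :=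
            sub_eq_iff_eq_add.1 hsub
        _ = τ • Phi K m (st K m X0 V0 n k) + st K m X0 V0 n k := by rw [key, ih]
        _ = st K m X0 V0 n (k+1) := by
            rw [show st K m X0 V0 n (k+1)
              = st K m X0 V0 n k + τ • Phi K m (st K m X0 V0 n k) from rfl]
            abel


lemma stp_close (n : ℕ) {s : ℝ} (hs : 0 ≤ s) :
    ‖stp K m X0 V0 n s - uc K m X0 V0 n s‖ ≤ Lb V0 * tau n := by
  have hτ0 := tau_pos n
  set k : ℕ := (⌊s / tau n⌋).toNat with hk
  have hfl0 : (0:ℤ) ≤ ⌊s / tau n⌋ := Int.floor_nonneg.2 (div_nonneg hs hτ0.le)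
  have hcast : ((k : ℤ) : ℝ) = ((⌊s / tau n⌋ : ℤ) : ℝ) := by
    rw [hk]; norm_cast; exact Int.toNat_of_nonneg hfl0
  have hklo : (k : ℝ) * tau n ≤ s := by
    have h1 : ((⌊s / tau n⌋ : ℤ) : ℝ) ≤ s / tau n := Int.floor_le _
    have : (k : ℝ) ≤ s / tau n := by rw [show ((k:ℝ)) = ((k:ℤ):ℝ) by norm_cast, hcast]; exact h1
    calc (k : ℝ) * tau n ≤ (s / tau n) * tau n := by nlinarith
      _ = s := by field_simp
  have hkhi : s - tau n ≤ (k : ℝ) * tau n := by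
    have h1 : s / tau n - 1 < ((⌊s / tau n⌋ : ℤ) : ℝ) := by
      have := Int.lt_floor_add_one (s / tau n); linarith
    have h2 : s / tau n - 1 < (k : ℝ) := by
      rw [show ((k:ℝ)) = ((k:ℤ):ℝ) by norm_cast, hcast]; exact h1
    have := mul_lt_mul_of_pos_right h2 hτ0
    have he : (s / tau n) * tau n = s := by field_simp
    nlinarith
  have hgrid : stp K m X0 V0 n s = uc K m X0 V0 n ((k : ℝ) * tau n) :=
    (uc_grid K X0 V0 hm hsum n k).symm
  rw [hgrid]
  have := uc_lipschitz K X0 V0 hm hsum n (a := s) (b := (k : ℝ) * tau n)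
  refine this.trans ?_
  have : |(k : ℝ) * tau n - s| ≤ tau n := by
    rw [abs_le]; constructor <;> linarith
  have hLb := Lb_pos (V0 := V0)
  nlinarith

/-- extraction of a pointwise-convergent subsequence -/
lemma exists_limit : ∃ (φ : ℕ → ℕ) (ul : ℝ → P d N), StrictMono φ ∧
    ∀ t : ℝ, Tendsto (fun mm => uc K m X0 V0 (φ mm) t) atTop (nhds (ul t)) := by
  have hLb := Lb_pos (V0 := V0)
  set Y : ℚ → Set (P d N) := fun q => closedBall (X0, V0) (Lb V0 * |(q:ℝ)|) with hY
  have hcomp : IsCompact (Set.pi Set.univ Y) :=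
    isCompact_univ_pi (fun q => isCompact_closedBall _ _)
  set u : ℕ → (ℚ → P d N) := fun n q => uc K m X0 V0 n (q : ℝ) with hu
  have humem : ∀ n, u n ∈ Set.pi Set.univ Y := by
    intro n q _
    simp only [hY, mem_closedBall, hu]
    rw [dist_eq_norm]
    have h := uc_lipschitz K X0 V0 hm hsum n (a := 0) (b := (q:ℝ))
    rw [uc_zero] at h
    simpa using h
  obtain ⟨l, -, φ, hφ, hconv⟩ := hcomp.tendsto_subseq humem
  rw [tendsto_pi_nhds] at hconv
  have hcauchy : ∀ t : ℝ, CauchySeq (fun mm => uc K m X0 V0 (φ mm) t) := by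
    intro t
    rw [Metric.cauchySeq_iff]
    intro ε hε
    set δ : ℝ := ε / (4 * Lb V0) with hδ
    have hδ0 : 0 < δ := by positivity
    obtain ⟨q, hq1, hq2⟩ := exists_rat_btwn (show t < t + δ by linarith)
    have hqt : |t - (q:ℝ)| ≤ δ := by rw [abs_le]; constructor <;> linarith
    have hcq : CauchySeq (fun mm => u (φ mm) q) := (hconv q).cauchySeq
    rw [Metric.cauchySeq_iff] at hcq
    obtain ⟨M, hM⟩ := hcq (ε/3) (by linarith)
    refine ⟨M, fun m1 hm1 m2 hm2 => ?_⟩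
    have h1 : dist (uc K m X0 V0 (φ m1) t) (uc K m X0 V0 (φ m1) (q:ℝ)) ≤ Lb V0 * δ := by
      rw [dist_eq_norm]
      refine (uc_lipschitz K X0 V0 hm hsum (φ m1) (a := (q:ℝ)) (b := t)).trans ?_
      have : |t - (q:ℝ)| ≤ δ := hqt
      nlinarith
    have h2 : dist (uc K m X0 V0 (φ m2) (q:ℝ)) (uc K m X0 V0 (φ m2) t) ≤ Lb V0 * δ := by
      rw [dist_eq_norm]
      refine (uc_lipschitz K X0 V0 hm hsum (φ m2) (a := t) (b := (q:ℝ))).trans ?_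
      have h3 : |(q:ℝ) - t| ≤ δ := by rw [abs_sub_comm]; exact hqt
      nlinarith
    have h3 := hM m1 hm1 m2 hm2
    have hLδ : Lb V0 * δ ≤ ε/4 := by
      rw [hδ, show Lb V0 * (ε / (4 * Lb V0)) = ε/4 * (Lb V0 / Lb V0) by ring,
        div_self (ne_of_gt hLb)]
      linarith
    calc dist (uc K m X0 V0 (φ m1) t) (uc K m X0 V0 (φ m2) t)
        ≤ dist (uc K m X0 V0 (φ m1) t) (uc K m X0 V0 (φ m1) (q:ℝ))
          + dist (uc K m X0 V0 (φ m1) (q:ℝ)) (uc K m X0 V0 (φ m2) (q:ℝ))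
          + dist (uc K m X0 V0 (φ m2) (q:ℝ)) (uc K m X0 V0 (φ m2) t) :=
            dist_triangle4 _ _ _ _
      _ < ε := by
          have := h3
          simp only [hu] at this
          linarith [h1, h2]
  have hex : ∀ t : ℝ, ∃ p : P d N,
      Tendsto (fun mm => uc K m X0 V0 (φ mm) t) atTop (nhds p) :=
    fun t => cauchySeq_tendsto_of_complete (hcauchy t)
  choose ul hul using hex
  exact ⟨φ, ul, hφ, hul⟩

end bounds2



lemma seq_to_nhdsNe (t : ℝ) :
    Tendsto (fun k : ℕ => t + (1:ℝ)/(k+1)) atTop (nhdsWithin t {t}ᶜ) := by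
  refine tendsto_nhdsWithin_iff.2 ⟨?_, ?_⟩
  · have h := tendsto_const_nhds (x := t) (f := (atTop : Filter ℕ)).add
      tendsto_one_div_add_atTop_nhds_zero_nat
    simpa using h
  · filter_upwards [] with k
    simp only [Set.mem_compl_iff, Set.mem_singleton_iff]
    intro h
    have h0 : (1:ℝ)/(k+1) = 0 := add_eq_left.1 h
    have : (0:ℝ) < 1/(k+1) := by positivity
    linarith

variable {F : Type*} [NormedAddCommGroup F] [NormedSpace ℝ F] [CompleteSpace F]

omit [CompleteSpace F] in
lemma norm_deriv_le_of_lip {f : ℝ → F} {L : ℝ} (hL : 0 ≤ L)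
    (hf : ∀ a b : ℝ, ‖f b - f a‖ ≤ L * |b - a|) (t : ℝ) : ‖deriv f t‖ ≤ L := by
  by_cases hd : DifferentiableAt ℝ f t
  · have hder := hd.hasDerivAt
    rw [hasDerivAt_iff_tendsto_slope] at hder
    have hcomp := hder.comp (seq_to_nhdsNe t)
    refine le_of_tendsto hcomp.norm (Filter.Eventually.of_forall fun k => ?_)
    have hc0 : (0:ℝ) < 1/(k+1) := by positivity
    simp only [Function.comp_apply]
    rw [slope_def_module, norm_smul, Real.norm_eq_abs]
    have h1 : t + 1/(k+1) - t = 1/(k+1) := by ring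
    rw [h1]
    have h2 : ‖f (t + 1/(k+1)) - f t‖ ≤ L * (1/(k+1)) := by
      have h3 := hf t (t + 1/(k+1))
      rwa [h1, abs_of_pos hc0] at h3
    calc |(1/(k+1) : ℝ)⁻¹| * ‖f (t + 1/(k+1)) - f t‖
        ≤ |(1/(k+1) : ℝ)⁻¹| * (L * (1/(k+1))) :=
          mul_le_mul_of_nonneg_left h2 (abs_nonneg _)
      _ = L := by
          rw [abs_of_pos (by positivity)]
          field_simp
  · rw [deriv_zero_of_not_differentiableAt hd, norm_zero]; exact hL

variable [FiniteDimensional ℝ F]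

lemma lipschitz_ftc {f : ℝ → F} {L : ℝ} (hL : 0 ≤ L)
    (hf : ∀ a b : ℝ, ‖f b - f a‖ ≤ L * |b - a|) (t : ℝ) :
    f t = f 0 + ∫ s in (0:ℝ)..t, deriv f s := by
  have hlip : LipschitzWith (Real.toNNReal L) f := by
    refine LipschitzWith.of_dist_le_mul fun a b => ?_
    rw [dist_eq_norm, Real.dist_eq, Real.coe_toNNReal _ hL]
    exact hf b a
  have hcont : Continuous f := hlip.continuous
  have hdiff_ae : ∀ᵐ s : ℝ ∂volume, DifferentiableAt ℝ f s := hlip.ae_differentiableAt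
  set c : ℕ → ℝ := fun k => (1:ℝ)/(k+1) with hc
  have hc0 : ∀ k, (0:ℝ) < c k := fun k => by positivity
  have hint : ∀ a b : ℝ, IntervalIntegrable f volume a b := fun a b =>
    hcont.intervalIntegrable a b
  have claim1 : ∀ k : ℕ, (∫ s in (0:ℝ)..t, ((k:ℝ)+1) • (f (s + c k) - f s))
      = ((k:ℝ)+1) • ((∫ s in t..(t + c k), f s) - ∫ s in (0:ℝ)..(c k), f s) := by
    intro k
    rw [intervalIntegral.integral_smul]
    congr 1
    have hck : Continuous fun s : ℝ => f (s + c k) :=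
      hcont.comp (continuous_add_right (c k))
    rw [intervalIntegral.integral_sub (hck.intervalIntegrable _ _) (hint 0 t)]
    rw [intervalIntegral.integral_comp_add_right f (c k)]
    have e1 : (0:ℝ) + c k = c k := by ring
    rw [e1]
    have h2 : (∫ s in (0:ℝ)..(t + c k), f s)
        = (∫ s in (0:ℝ)..t, f s) + ∫ s in t..(t + c k), f s :=
      (intervalIntegral.integral_add_adjacent_intervals (hint 0 t) (hint t _)).symm
    have h3 : (∫ s in (0:ℝ)..(t + c k), f s)
        = (∫ s in (0:ℝ)..(c k), f s) + ∫ s in (c k)..(t + c k), f s :=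
      (intervalIntegral.integral_add_adjacent_intervals (hint 0 _) (hint _ _)).symm
    have h4 : (∫ s in (c k)..(t + c k), f s)
        = (∫ s in (0:ℝ)..t, f s) + (∫ s in t..(t + c k), f s)
          - ∫ s in (0:ℝ)..(c k), f s := by
      rw [eq_sub_iff_add_eq, add_comm, ← h3, h2]
    rw [h4]
    abel
  have hbound : ∀ (a : ℝ), Tendsto (fun k : ℕ => ((k:ℝ)+1) • ∫ s in a..(a + c k), f s)
      atTop (nhds (f a)) := by
    intro a
    rw [← tendsto_sub_nhds_zero_iff]
    refine squeeze_zero_norm (a := fun k : ℕ => L * c k) (fun k => ?_) ?_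
    · have e0 : ((k:ℝ)+1) • (∫ s in a..(a + c k), f a) = f a := by
        rw [intervalIntegral.integral_const, smul_smul]
        have h5 : ((k:ℝ)+1) * (a + c k - a) = 1 := by
          rw [hc]; field_simp; ring
        rw [h5, one_smul]
      rw [show ((k:ℝ)+1) • (∫ s in a..(a + c k), f s) - f a
          = ((k:ℝ)+1) • ((∫ s in a..(a + c k), f s)
            - (∫ s in a..(a + c k), f a)) by rw [smul_sub, e0]]
      rw [← intervalIntegral.integral_sub (hint _ _) intervalIntegrable_const]
      rw [norm_smul, Real.norm_eq_abs, abs_of_pos (by positivity : (0:ℝ) < (k:ℝ)+1)]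
      have hb : ‖∫ s in a..(a + c k), (f s - f a)‖ ≤ (L * c k) * |a + c k - a| := by
        refine intervalIntegral.norm_integral_le_of_norm_le_const fun s hs => ?_
        have hmem : s ∈ Set.Ioc a (a + c k) := by
          rwa [Set.uIoc_of_le (by linarith [hc0 k])] at hs
        have h6 : |s - a| ≤ c k := by
          rw [abs_le]; constructor
          · linarith [hmem.1, hc0 k]
          · linarith [hmem.2]
        calc ‖f s - f a‖ ≤ L * |s - a| := hf a s
          _ ≤ L * c k := mul_le_mul_of_nonneg_left h6 hL
      have e2 : |a + c k - a| = c k := by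
        rw [show a + c k - a = c k by ring, abs_of_pos (hc0 k)]
      rw [e2] at hb
      calc ((k:ℝ)+1) * ‖∫ s in a..(a + c k), (f s - f a)‖
          ≤ ((k:ℝ)+1) * ((L * c k) * c k) :=
            mul_le_mul_of_nonneg_left hb (by positivity)
        _ = L * c k := by rw [hc]; field_simp
    · have h7 : Tendsto (fun k : ℕ => c k) atTop (nhds 0) := by
        rw [hc]; exact tendsto_one_div_add_atTop_nhds_zero_nat
      have := h7.const_mul L
      simpa using this
  have claim4 : Tendsto (fun k : ℕ => ∫ s in (0:ℝ)..t, ((k:ℝ)+1) • (f (s + c k) - f s))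
      atTop (nhds (∫ s in (0:ℝ)..t, deriv f s)) := by
    refine intervalIntegral.tendsto_integral_filter_of_dominated_convergence
      (fun _ => L) ?_ ?_ ?_ ?_
    · refine Filter.Eventually.of_forall fun k => ?_
      have hck : Continuous fun s : ℝ => ((k:ℝ)+1) • (f (s + c k) - f s) :=
        ((hcont.comp (continuous_add_right (c k))).sub hcont).const_smul _
      exact hck.aestronglyMeasurable.restrict
    · refine Filter.Eventually.of_forall fun k => ?_
      refine ae_of_all _ fun s _ => ?_
      rw [norm_smul, Real.norm_eq_abs, abs_of_pos (by positivity : (0:ℝ) < (k:ℝ)+1)]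
      have h2 := hf s (s + c k)
      have e2 : |s + c k - s| = c k := by
        rw [show s + c k - s = c k by ring, abs_of_pos (hc0 k)]
      rw [e2] at h2
      calc ((k:ℝ)+1) * ‖f (s + c k) - f s‖ ≤ ((k:ℝ)+1) * (L * c k) :=
            mul_le_mul_of_nonneg_left h2 (by positivity)
        _ = L := by rw [hc]; field_simp
    · exact intervalIntegrable_const
    · filter_upwards [hdiff_ae] with s hs _
      have hder := hs.hasDerivAt
      rw [hasDerivAt_iff_tendsto_slope] at hder
      have hcomp := hder.comp (seq_to_nhdsNe s)
      refine hcomp.congr fun k => ?_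
      simp only [Function.comp_apply]
      rw [slope_def_module]
      have e3 : s + (1:ℝ)/(k+1) - s = c k := by rw [hc]; ring
      rw [e3]
      congr 1
      rw [hc]
      field_simp
  have claim5 : Tendsto (fun k : ℕ => ∫ s in (0:ℝ)..t, ((k:ℝ)+1) • (f (s + c k) - f s))
      atTop (nhds (f t - f 0)) := by
    have h := (hbound t).sub (hbound 0)
    refine h.congr fun k => ?_
    rw [claim1 k, smul_sub]
    congr 2
    rw [zero_add]
  have := tendsto_nhds_unique claim5 claim4
  rw [← this]
  abel

end Stmt3Aux

open Stmt3Aux in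
set_option maxHeartbeats 2000000 in
/-- Under hypotheses (H1)–(H2) on the sensitivity regions `K(v)`,
for every `N`, weights `m_i > 0` summing to one and initial data `(X_i⁰,V_i⁰)`,
the `N`-particle differential inclusion has a global-in-time solution: locally
absolutely continuous curves (expressed in integral form with locally integrable
derivatives) `X_i, V_i : [0,∞) → ℝ^d` with `X_i(0) = X_i⁰`, `V_i(0) = V_i⁰`,
`X_i'(t) = V_i(t)` and, for a.e. `t ≥ 0`,
`V_i'(t) ∈ { Σ_{j≠i} α_{ij} m_j (V_j(t) − V_i(t)) : α_{ij} ∈ 𝒜(X_i(t)−X_j(t), V_i(t)) }`. -/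
theorem stmt3 {d : ℕ}
    (K Θ : E d → Set (E d)) (𝒦 : Set (E d)) (C : ℝ)
    (hKne : ∀ v, (K v).Nonempty) (hKcp : ∀ v, IsCompact (K v))
    (h𝒦 : IsCompact 𝒦) (hKsub : ∀ v, K v ⊆ 𝒦)
    (hΘcl : ∀ v, IsClosed (Θ v)) (hC : 0 < C)
    (h2i : ∀ v, frontier (K v) ⊆ Θ v)
    (h2ii : ∀ v, ∀ ε ∈ Set.Ioo (0:ℝ) 1,
      volume (Θ v + closedBall (0 : E d) ε) ≤ ENNReal.ofReal (C * ε))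
    (h2iii : ∀ v w, symmDiff (K v) (K w) ⊆ Θ v + closedBall (0 : E d) (C * ‖v - w‖))
    (h2iv : ∀ v w, Θ w ⊆ Θ v + closedBall (0 : E d) (C * ‖v - w‖))
    (N : ℕ) (m : Fin N → ℝ) (hm : ∀ i, 0 < m i) (hsum : ∑ i, m i = 1)
    (X0 V0 : Fin N → E d) :
    ∃ X V G : Fin N → ℝ → E d,
      (∀ i, X i 0 = X0 i ∧ V i 0 = V0 i) ∧
      (∀ i t, 0 ≤ t → IntervalIntegrable (V i) volume 0 t ∧
        IntervalIntegrable (G i) volume 0 t) ∧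
      (∀ i t, 0 ≤ t → X i t = X0 i + ∫ s in (0:ℝ)..t, V i s) ∧
      (∀ i t, 0 ≤ t → V i t = V0 i + ∫ s in (0:ℝ)..t, G i s) ∧
      (∀ᵐ t ∂(volume.restrict (Set.Ici (0:ℝ))), ∀ i, ∃ α : Fin N → ℝ,
        (∀ j, α j ∈ admissibleSlopes K (X i t - X j t) (V i t)) ∧
        G i t = ∑ j ∈ Finset.univ.erase i, (α j * m j) • (V j t - V i t)) := by
  classical
  clear hKne hKcp h𝒦 hKsub hΘcl hC h2i h2ii h2iii h2iv
  obtain ⟨φ, ul, hφ, hul⟩ := exists_limit K X0 V0 hm hsum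
  set L : ℝ := Lb V0 with hLdef
  have hL0 : 0 < L := Lb_pos V0
  -- basic facts on the limit curve
  have hul0 : ul 0 = (X0, V0) := by
    refine tendsto_nhds_unique (hul 0) ?_
    have : (fun mm => uc K m X0 V0 (φ mm) 0) = fun _ => (X0, V0) := by
      funext mm; exact uc_zero K X0 V0
    rw [this]; exact tendsto_const_nhds
  have hullip : ∀ a b : ℝ, ‖ul b - ul a‖ ≤ L * |b - a| := by
    intro a b
    have h1 : Tendsto (fun mm => uc K m X0 V0 (φ mm) b - uc K m X0 V0 (φ mm) a)
        atTop (nhds (ul b - ul a)) := (hul b).sub (hul a)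
    exact le_of_tendsto h1.norm (Filter.Eventually.of_forall fun mm =>
      uc_lipschitz K X0 V0 hm hsum (φ mm))
  -- the curves
  set X : Fin N → ℝ → E d := fun i t => (ul t).1 i with hXdef
  set V : Fin N → ℝ → E d := fun i t => (ul t).2 i with hVdef
  set G : Fin N → ℝ → E d := fun i t => deriv (V i) t with hGdef
  have hVlip : ∀ i, ∀ a b : ℝ, ‖V i b - V i a‖ ≤ L * |b - a| := by
    intro i a b
    have h1 : V i b - V i a = ((ul b - ul a).2) i := rfl
    rw [h1]
    calc ‖((ul b - ul a).2) i‖ ≤ ‖(ul b - ul a).2‖ := norm_le_pi_norm _ i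
      _ ≤ ‖ul b - ul a‖ := norm_snd_le _
      _ ≤ L * |b - a| := hullip a b
  have hXlip : ∀ i, ∀ a b : ℝ, ‖X i b - X i a‖ ≤ L * |b - a| := by
    intro i a b
    have h1 : X i b - X i a = ((ul b - ul a).1) i := rfl
    rw [h1]
    calc ‖((ul b - ul a).1) i‖ ≤ ‖(ul b - ul a).1‖ := norm_le_pi_norm _ i
      _ ≤ ‖ul b - ul a‖ := norm_fst_le _
      _ ≤ L * |b - a| := hullip a b
  have hVcont : ∀ i, Continuous (V i) := by
    intro i
    refine (LipschitzWith.of_dist_le_mul (K := Real.toNNReal L) fun a b => ?_).continuous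
    rw [dist_eq_norm, Real.dist_eq, Real.coe_toNNReal _ hL0.le]
    exact hVlip i b a
  -- convergence of components
  have hulcomp2 : ∀ (i : Fin N) (s : ℝ),
      Tendsto (fun mm => (uc K m X0 V0 (φ mm) s).2 i) atTop (nhds (V i s)) := by
    intro i s
    exact (((continuous_apply i).comp continuous_snd).continuousAt).tendsto.comp (hul s)
  have hulcomp1 : ∀ (i : Fin N) (s : ℝ),
      Tendsto (fun mm => (uc K m X0 V0 (φ mm) s).1 i) atTop (nhds (X i s)) := by
    intro i s
    exact (((continuous_apply i).comp continuous_fst).continuousAt).tendsto.comp (hul s)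
  have htau0 : Tendsto (fun mm => tau (φ mm)) atTop (nhds 0) :=
    tau_tendsto.comp hφ.tendsto_atTop
  refine ⟨X, V, G, ?_, ?_, ?_, ?_, ?_⟩
  · -- initial data
    intro i
    constructor
    · show (ul 0).1 i = X0 i
      rw [hul0]
    · show (ul 0).2 i = V0 i
      rw [hul0]
  · -- integrability
    intro i t _
    constructor
    · exact ((hVcont i).intervalIntegrable _ _)
    · rw [intervalIntegrable_iff]
      refine Integrable.mono' (g := fun _ => L)
        (integrableOn_const measure_Ioc_lt_top.ne)
        ((measurable_deriv (V i)).aestronglyMeasurable.restrict)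
        (ae_of_all _ fun s => norm_deriv_le_of_lip hL0.le (hVlip i) s)
  · -- X identity
    intro i t ht
    -- projection of the Euler curves
    set Pr : P d N →L[ℝ] E d :=
      (ContinuousLinearMap.proj i).comp (ContinuousLinearMap.fst ℝ _ _) with hPr
    have hcomp : ∀ n, (uc K m X0 V0 n t).1 i
        = X0 i + ∫ s in (0:ℝ)..t, (stp K m X0 V0 n s).2 i := by
      intro n
      have h1 : (uc K m X0 V0 n t).1 i = Pr (uc K m X0 V0 n t) := rfl
      have h2 : Pr (uc K m X0 V0 n t)
          = Pr (X0, V0) + Pr (∫ s in (0:ℝ)..t, Phi K m (stp K m X0 V0 n s)) := by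
        rw [show uc K m X0 V0 n t
          = (X0, V0) + ∫ s in (0:ℝ)..t, Phi K m (stp K m X0 V0 n s) from rfl, map_add]
      rw [h1, h2, ← Pr.intervalIntegral_comp_comm (intInt_step K X0 V0 hm hsum n 0 t)]
      rfl
    -- limit of LHS
    have hlhs : Tendsto (fun mm => (uc K m X0 V0 (φ mm) t).1 i) atTop (nhds (X i t)) :=
      hulcomp1 i t
    -- limit of RHS by dominated convergence
    have hrhs : Tendsto (fun mm => X0 i + ∫ s in (0:ℝ)..t, (stp K m X0 V0 (φ mm) s).2 i)
        atTop (nhds (X0 i + ∫ s in (0:ℝ)..t, V i s)) := by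
      refine Tendsto.const_add _ ?_
      refine intervalIntegral.tendsto_integral_filter_of_dominated_convergence
        (fun _ => Rb V0) ?_ ?_ ?_ ?_
      · refine Filter.Eventually.of_forall fun mm => ?_
        have hme : Measurable (fun s => (stp K m X0 V0 (φ mm) s).2 i) := by
          have h1 : Measurable (fun s : ℝ => ⌊s / tau (φ mm)⌋) :=
            Int.measurable_floor.comp (measurable_id.div_const _)
          exact (measurable_from_top
            (f := fun z : ℤ => (st K m X0 V0 (φ mm) z.toNat).2 i)).comp h1
        exact hme.aestronglyMeasurable.restrict
      · refine Filter.Eventually.of_forall fun mm => ae_of_all _ fun s _ => ?_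
        exact st_vel_norm_le K X0 V0 hm hsum (φ mm) _ i
      · exact intervalIntegrable_const
      · refine ae_of_all _ fun s hs => ?_
        have hs0 : 0 ≤ s := by
          rcases hs with hs
          rw [Set.uIoc_of_le ht] at hs
          exact hs.1.le
        -- stp close to uc, uc converges
        have hclose : ∀ mm, ‖(stp K m X0 V0 (φ mm) s).2 i - (uc K m X0 V0 (φ mm) s).2 i‖
            ≤ L * tau (φ mm) := by
          intro mm
          calc ‖(stp K m X0 V0 (φ mm) s).2 i - (uc K m X0 V0 (φ mm) s).2 i‖
              = ‖((stp K m X0 V0 (φ mm) s - uc K m X0 V0 (φ mm) s).2) i‖ := rfl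
            _ ≤ ‖(stp K m X0 V0 (φ mm) s - uc K m X0 V0 (φ mm) s).2‖ := norm_le_pi_norm _ i
            _ ≤ ‖stp K m X0 V0 (φ mm) s - uc K m X0 V0 (φ mm) s‖ := norm_snd_le _
            _ ≤ L * tau (φ mm) := stp_close K X0 V0 hm hsum (φ mm) hs0
        have hdiff : Tendsto (fun mm => (stp K m X0 V0 (φ mm) s).2 i
            - (uc K m X0 V0 (φ mm) s).2 i) atTop (nhds 0) := by
          refine squeeze_zero_norm hclose ?_
          have := htau0.const_mul L
          simpa using this
        have := hdiff.add (hulcomp2 i s)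
        simpa using this
    rw [tendsto_nhds_unique hlhs (by
      have : (fun mm => (uc K m X0 V0 (φ mm) t).1 i)
          = fun mm => X0 i + ∫ s in (0:ℝ)..t, (stp K m X0 V0 (φ mm) s).2 i := by
        funext mm; exact hcomp (φ mm)
      rw [this]
      exact hrhs)]
  · -- V identity
    intro i t _
    have h0 : V i 0 = V0 i := by show (ul 0).2 i = V0 i; rw [hul0]
    have := lipschitz_ftc hL0.le (hVlip i) t
    rw [this, h0]
  · -- the differential inclusion, a.e.
    have hradem : ∀ᵐ t ∂(volume : Measure ℝ), ∀ i, HasDerivAt (V i) (G i t) t := by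
      rw [MeasureTheory.ae_all_iff]
      intro i
      have hlip : LipschitzWith (Real.toNNReal L) (V i) := by
        refine LipschitzWith.of_dist_le_mul fun a b => ?_
        rw [dist_eq_norm, Real.dist_eq, Real.coe_toNNReal _ hL0.le]
        exact hVlip i b a
      filter_upwards [hlip.ae_differentiableAt (μ := volume)] with t ht
      exact ht.hasDerivAt
    filter_upwards [ae_restrict_of_ae hradem, ae_restrict_mem measurableSet_Ici]
      with t hder ht0
    intro i
    by_contra hcon
    push_neg at hcon
    set A : Fin N → Set ℝ := fun j => admissibleSlopes K (X i t - X j t) (V i t) with hA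
    set w : Fin N → E d := fun j => V j t - V i t with hw
    set T : (Fin N → ℝ) → E d :=
      fun α => ∑ j ∈ Finset.univ.erase i, (α j * m j) • w j with hT
    set S : Set (E d) := T '' (Set.pi Set.univ A) with hS
    have hGS : G i t ∉ S := by
      rintro ⟨α, hα, hTα⟩
      exact hcon α (fun j => hα j (Set.mem_univ j)) hTα.symm
    -- S is a closed convex set
    have hAconv : ∀ j, Convex ℝ (A j) := fun j => convex_convexHull ℝ _
    have hAcomp : ∀ j, IsCompact (A j) := by
      intro j
      rw [hA]
      simp only []
      rw [admissibleSlopes_eq_Icc]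
      exact isCompact_Icc
    have hTcont : Continuous T := by
      refine continuous_finset_sum _ fun j _ => ?_
      exact ((continuous_apply j).mul continuous_const).smul continuous_const
    have hboxcomp : IsCompact (Set.pi Set.univ A) := isCompact_univ_pi hAcomp
    have hSclosed : IsClosed S := (hboxcomp.image hTcont).isClosed
    have hSconv : Convex ℝ S := by
      rintro x ⟨α, hα, rfl⟩ y ⟨β, hβ, rfl⟩ a b ha hb hab
      refine ⟨fun j => a * α j + b * β j, ?_, ?_⟩
      · intro j _
        exact hAconv j (hα j (Set.mem_univ j)) (hβ j (Set.mem_univ j)) ha hb hab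
      · show T _ = a • T α + b • T β
        rw [hT]
        simp only []
        rw [Finset.smul_sum, Finset.smul_sum, ← Finset.sum_add_distrib]
        refine Finset.sum_congr rfl fun j _ => ?_
        rw [smul_smul, smul_smul, ← add_smul]
        congr 1
        ring
    obtain ⟨f, uu, hfu, huf⟩ := geometric_hahn_banach_closed_point hSconv hSclosed hGS
    set c : Fin N → ℝ := fun j => f (w j) with hc
    set α0 : Fin N → ℝ := fun j => amax K (X i t - X j t) (V i t) (c j) with hα0
    have hα0box : α0 ∈ Set.pi Set.univ A := by
      intro j _
      rw [hα0, hA]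
      simp only []
      exact amax_mem (c j)
    have hTα0S : T α0 ∈ S := ⟨α0, hα0box, rfl⟩
    have hfTα0 : f (T α0) = ∑ j ∈ Finset.univ.erase i, m j * (α0 j * c j) := by
      rw [hT]
      simp only []
      rw [map_sum]
      refine Finset.sum_congr rfl fun j _ => ?_
      rw [_root_.map_smul, smul_eq_mul, hc]
      ring
    -- the crucial upper bound on f (G i t)
    have hkey : ∀ δ : ℝ, 0 < δ → f (G i t) ≤ f (T α0) + δ := by
      intro δ hδ
      have hev : ∀ᶠ p : P d N in nhds (ul t), ∀ j ∈ Finset.univ.erase i,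
          ind (K (p.2 i)) (p.1 i - p.1 j) * c j ≤ α0 j * c j + δ/2 := by
        rw [eventually_all_finset]
        intro j _
        have hj1 : ∀ᶠ q : E d × E d in nhds (X i t - X j t, V i t),
            ind (K q.2) q.1 * c j ≤ amax K (X i t - X j t) (V i t) (c j) * c j + δ/2 :=
          eventually_ind_mul_le (c j) (by linarith)
        have hcm : Continuous (fun p : P d N => (p.1 i - p.1 j, p.2 i)) :=
          (((continuous_apply i).comp continuous_fst).sub
            ((continuous_apply j).comp continuous_fst)).prodMk
            ((continuous_apply i).comp continuous_snd)
        have hmap : Tendsto (fun p : P d N => (p.1 i - p.1 j, p.2 i)) (nhds (ul t))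
            (nhds (X i t - X j t, V i t)) := by
          have he : (fun p : P d N => (p.1 i - p.1 j, p.2 i)) (ul t)
              = (X i t - X j t, V i t) := rfl
          exact he ▸ hcm.continuousAt.tendsto
        exact hmap.eventually hj1
      obtain ⟨ρ, hρ0, hρ⟩ := Metric.eventually_nhds_iff.1 hev
      set h₀ : ℝ := min 1 (ρ / (8 * (L + 1))) with hh₀
      have hh₀0 : 0 < h₀ := lt_min one_pos (by positivity)
      -- the bound for each small h > 0
      have hkeyh : ∀ h : ℝ, 0 < h → h ≤ h₀ →
          f (V i (t + h) - V i t)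
            ≤ h * (f (T α0) + δ/2 + ‖f‖ * (2 * ((2*L+1) * h))) := by
        intro h hh0 hhh₀
        set ε₁ : ℝ := (2*L+1) * h with hε₁
        have hε₁0 : 0 < ε₁ := by positivity
        have hε₁ρ : ε₁ < ρ := by
          have h1 : h ≤ ρ / (8 * (L + 1)) := le_trans hhh₀ (min_le_right _ _)
          have h2 : (2*L+1) * h ≤ (2*L+1) * (ρ / (8 * (L + 1))) :=
            mul_le_mul_of_nonneg_left h1 (by linarith)
          have h4 : (0:ℝ) < 8 * (L+1) := by linarith
          have h6 : ρ / (8*(L+1)) * (8*(L+1)) = ρ := div_mul_cancel₀ ρ (ne_of_gt h4)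
          have h7 : 0 < ρ / (8*(L+1)) := div_pos hρ0 h4
          nlinarith [h2, h6, h7, hL0]
        have hstep : ∀ mm, tau (φ mm) ≤ h → dist (uc K m X0 V0 (φ mm) t) (ul t) ≤ h →
            f ((uc K m X0 V0 (φ mm) (t + h)).2 i - (uc K m X0 V0 (φ mm) t).2 i)
              ≤ h * (f (T α0) + δ/2 + ‖f‖ * (2 * ε₁)) := by
          intro mm htm hdm
          set n := φ mm with hn
          set F : P d N →L[ℝ] ℝ := f.comp ((ContinuousLinearMap.proj i).comp
            (ContinuousLinearMap.snd ℝ _ _)) with hF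
          have hcompint : f ((uc K m X0 V0 n (t+h)).2 i - (uc K m X0 V0 n t).2 i)
              = ∫ s in t..(t+h), F (Phi K m (stp K m X0 V0 n s)) := by
            have h1 : f ((uc K m X0 V0 n (t+h)).2 i - (uc K m X0 V0 n t).2 i)
                = F (uc K m X0 V0 n (t+h) - uc K m X0 V0 n t) := rfl
            rw [h1, uc_sub K X0 V0 hm hsum n t (t+h),
              ← F.intervalIntegral_comp_comm (intInt_step K X0 V0 hm hsum n t (t+h))]
          rw [hcompint]
          have hpt : ∀ s ∈ Set.Icc t (t+h),
              F (Phi K m (stp K m X0 V0 n s)) ≤ f (T α0) + δ/2 + ‖f‖ * (2 * ε₁) := by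
            intro s hs
            set p : P d N := stp K m X0 V0 n s with hp
            have hs0 : (0:ℝ) ≤ s := le_trans ht0 hs.1
            have hdp : dist p (ul t) ≤ ε₁ := by
              have h1 : dist p (uc K m X0 V0 n s) ≤ L * tau n := by
                rw [dist_eq_norm]
                exact stp_close K X0 V0 hm hsum n hs0
              have h2 : dist (uc K m X0 V0 n s) (uc K m X0 V0 n t) ≤ L * |s - t| := by
                rw [dist_eq_norm]
                exact uc_lipschitz K X0 V0 hm hsum n
              have h4 : |s - t| ≤ h := by
                rw [abs_le]
                constructor
                · linarith [hs.1]
                · linarith [hs.2]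
              calc dist p (ul t)
                  ≤ dist p (uc K m X0 V0 n s) + dist (uc K m X0 V0 n s) (uc K m X0 V0 n t)
                    + dist (uc K m X0 V0 n t) (ul t) := dist_triangle4 _ _ _ _
                _ ≤ L * tau n + L * |s - t| + h := by
                    refine add_le_add (add_le_add h1 h2) hdm
                _ ≤ ε₁ := by
                    have h5 : L * tau n ≤ L * h := mul_le_mul_of_nonneg_left htm hL0.le
                    have h6 : L * |s - t| ≤ L * h := mul_le_mul_of_nonneg_left h4 hL0.le
                    rw [hε₁]
                    nlinarith
            have hρp : ∀ j ∈ Finset.univ.erase i,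
                ind (K (p.2 i)) (p.1 i - p.1 j) * c j ≤ α0 j * c j + δ/2 :=
              hρ (lt_of_le_of_lt hdp hε₁ρ)
            have hverr : ∀ j : Fin N, ‖p.2 j - V j t‖ ≤ ε₁ := by
              intro j
              calc ‖p.2 j - V j t‖ = ‖((p - ul t).2) j‖ := rfl
                _ ≤ ‖(p - ul t).2‖ := norm_le_pi_norm _ j
                _ ≤ ‖p - ul t‖ := norm_snd_le _
                _ ≤ ε₁ := by rw [← dist_eq_norm]; exact hdp
            have hFP : F (Phi K m p) = ∑ j ∈ Finset.univ.erase i,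
                (ind (K (p.2 i)) (p.1 i - p.1 j) * m j) * f (p.2 j - p.2 i) := by
              have h5 : F (Phi K m p) = f ((Phi K m p).2 i) := rfl
              rw [h5, show (Phi K m p).2 i = ∑ j ∈ Finset.univ.erase i,
                ((ind (K (p.2 i)) (p.1 i - p.1 j)) * m j) • (p.2 j - p.2 i) from rfl,
                map_sum]
              refine Finset.sum_congr rfl fun j _ => ?_
              rw [_root_.map_smul, smul_eq_mul]
            rw [hFP]
            have hterm : ∀ j ∈ Finset.univ.erase i,
                (ind (K (p.2 i)) (p.1 i - p.1 j) * m j) * f (p.2 j - p.2 i)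
                  ≤ m j * (α0 j * c j) + (m j * (δ/2) + m j * (‖f‖ * (2*ε₁))) := by
              intro j hj
              set b := ind (K (p.2 i)) (p.1 i - p.1 j) with hb
              have hb01 := ind_mem_Icc (K (p.2 i)) (p.1 i - p.1 j)
              rw [← hb] at hb01
              have herr : |f (p.2 j - p.2 i) - c j| ≤ ‖f‖ * (2*ε₁) := by
                have h6 : f ((p.2 j - p.2 i) - w j) = f (p.2 j - p.2 i) - c j :=
                  map_sub f _ _
                rw [← h6]
                calc |f ((p.2 j - p.2 i) - w j)|
                    ≤ ‖f‖ * ‖(p.2 j - p.2 i) - w j‖ := f.le_opNorm _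
                  _ ≤ ‖f‖ * (2*ε₁) := by
                    refine mul_le_mul_of_nonneg_left ?_ (norm_nonneg _)
                    have h7 : (p.2 j - p.2 i) - w j
                        = (p.2 j - V j t) - (p.2 i - V i t) := by rw [hw]; exact sub_sub_sub_comm _ _ _ _
                    rw [h7]
                    calc ‖(p.2 j - V j t) - (p.2 i - V i t)‖
                        ≤ ‖p.2 j - V j t‖ + ‖p.2 i - V i t‖ := norm_sub_le _ _
                      _ ≤ 2*ε₁ := by linarith [hverr j, hverr i]
              have hbc : b * c j ≤ α0 j * c j + δ/2 := hρp j hj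
              have hexp : (b * m j) * f (p.2 j - p.2 i)
                  = m j * (b * c j) + (b * m j) * (f (p.2 j - p.2 i) - c j) := by ring
              rw [hexp]
              have h7 : (b * m j) * (f (p.2 j - p.2 i) - c j) ≤ m j * (‖f‖ * (2*ε₁)) := by
                calc (b * m j) * (f (p.2 j - p.2 i) - c j)
                    ≤ (b * m j) * |f (p.2 j - p.2 i) - c j| :=
                      mul_le_mul_of_nonneg_left (le_abs_self _)
                        (mul_nonneg hb01.1 (hm j).le)
                  _ ≤ m j * (‖f‖ * (2*ε₁)) := by
                      refine mul_le_mul ?_ herr (abs_nonneg _) (hm j).le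
                      nlinarith [hb01.1, hb01.2, (hm j).le]
              have h8 : m j * (b * c j) ≤ m j * (α0 j * c j + δ/2) :=
                mul_le_mul_of_nonneg_left hbc (hm j).le
              have h9 : m j * (α0 j * c j + δ/2) = m j * (α0 j * c j) + m j * (δ/2) := by
                ring
              linarith
            have hsum1 : ∑ j ∈ Finset.univ.erase i, m j * (δ/2) ≤ δ/2 := by
              rw [← Finset.sum_mul]
              have := sum_erase_le_one hm hsum i
              nlinarith
            have hsum2 : ∑ j ∈ Finset.univ.erase i, m j * (‖f‖ * (2*ε₁))
                ≤ ‖f‖ * (2*ε₁) := by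
              rw [← Finset.sum_mul]
              have h10 := sum_erase_le_one hm hsum i
              have h11 : 0 ≤ ‖f‖ * (2*ε₁) := by positivity
              nlinarith
            calc ∑ j ∈ Finset.univ.erase i,
                  (ind (K (p.2 i)) (p.1 i - p.1 j) * m j) * f (p.2 j - p.2 i)
                ≤ ∑ j ∈ Finset.univ.erase i,
                  (m j * (α0 j * c j) + (m j * (δ/2) + m j * (‖f‖ * (2*ε₁)))) :=
                  Finset.sum_le_sum hterm
              _ = (∑ j ∈ Finset.univ.erase i, m j * (α0 j * c j))
                  + ((∑ j ∈ Finset.univ.erase i, m j * (δ/2))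
                    + ∑ j ∈ Finset.univ.erase i, m j * (‖f‖ * (2*ε₁))) := by
                  rw [Finset.sum_add_distrib, Finset.sum_add_distrib]
              _ ≤ f (T α0) + δ/2 + ‖f‖ * (2 * ε₁) := by
                  rw [hfTα0]
                  linarith [hsum1, hsum2]
          have hii : IntervalIntegrable
              (fun s => F (Phi K m (stp K m X0 V0 n s))) volume t (t+h) := by
            rw [intervalIntegrable_iff]
            exact F.integrable_comp
              (intervalIntegrable_iff.1 (intInt_step K X0 V0 hm hsum n t (t+h)))
          calc (∫ s in t..(t+h), F (Phi K m (stp K m X0 V0 n s)))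
              ≤ ∫ _s in t..(t+h), (f (T α0) + δ/2 + ‖f‖ * (2*ε₁)) :=
                intervalIntegral.integral_mono_on (by linarith) hii
                  intervalIntegrable_const hpt
            _ = h * (f (T α0) + δ/2 + ‖f‖ * (2 * ε₁)) := by
                rw [intervalIntegral.integral_const, smul_eq_mul,
                  show t + h - t = h by ring]
        -- pass to the limit in mm
        have hev2 : ∀ᶠ mm in atTop,
            tau (φ mm) ≤ h ∧ dist (uc K m X0 V0 (φ mm) t) (ul t) ≤ h := by
          have h1 := htau0 (Iio_mem_nhds hh0)
          have h2 := (tendsto_iff_dist_tendsto_zero.1 (hul t)) (Iio_mem_nhds hh0)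
          filter_upwards [h1, h2] with mm hm1 hm2
          exact ⟨le_of_lt hm1, le_of_lt hm2⟩
        have hlim : Tendsto (fun mm =>
            f ((uc K m X0 V0 (φ mm) (t + h)).2 i - (uc K m X0 V0 (φ mm) t).2 i))
            atTop (nhds (f (V i (t + h) - V i t))) := by
          have h1 : Tendsto (fun mm => (uc K m X0 V0 (φ mm) (t+h)).2 i
              - (uc K m X0 V0 (φ mm) t).2 i) atTop (nhds (V i (t+h) - V i t)) :=
            (hulcomp2 i (t+h)).sub (hulcomp2 i t)
          exact (f.continuous.continuousAt.tendsto).comp h1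
        refine le_of_tendsto hlim ?_
        filter_upwards [hev2] with mm hmm
        exact hstep mm hmm.1 hmm.2
      -- difference quotients along 1/(k+1)
      have hslope := (hasDerivAt_iff_tendsto_slope.1 (hder i)).comp (seq_to_nhdsNe t)
      have hfslope : Tendsto (fun k : ℕ => f (slope (V i) t (t + 1/((k:ℝ)+1))))
          atTop (nhds (f (G i t))) :=
        (f.continuous.continuousAt.tendsto).comp hslope
      have htail : Tendsto (fun k : ℕ => ‖f‖ * (2 * ((2*L+1) * (1/((k:ℝ)+1)))))
          atTop (nhds 0) := by
        have h1 := tendsto_one_div_add_atTop_nhds_zero_nat.const_mul (‖f‖ * (2 * (2*L+1)))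
        rw [mul_zero] at h1
        exact h1.congr fun k => by ring
      have hmain : Tendsto (fun k : ℕ => f (slope (V i) t (t + 1/((k:ℝ)+1)))
          - ‖f‖ * (2 * ((2*L+1) * (1/((k:ℝ)+1))))) atTop (nhds (f (G i t))) := by
        have h2 := hfslope.sub htail
        rwa [sub_zero] at h2
      have hb : ∀ᶠ k : ℕ in atTop, f (slope (V i) t (t + 1/((k:ℝ)+1)))
          - ‖f‖ * (2 * ((2*L+1) * (1/((k:ℝ)+1)))) ≤ f (T α0) + δ/2 := by
        have hev3 : ∀ᶠ k : ℕ in atTop, 1/((k:ℝ)+1) < h₀ :=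
          tendsto_one_div_add_atTop_nhds_zero_nat (Iio_mem_nhds hh₀0)
        filter_upwards [hev3] with k hk
        set hh : ℝ := 1/((k:ℝ)+1) with hhh
        have hhk0 : 0 < hh := by rw [hhh]; positivity
        have h9 := hkeyh hh hhk0 hk.le
        have h10 : f (slope (V i) t (t + hh)) = hh⁻¹ * f (V i (t + hh) - V i t) := by
          rw [slope_def_module, show t + hh - t = hh by ring, _root_.map_smul, smul_eq_mul]
        have h11 : hh⁻¹ * f (V i (t + hh) - V i t)
            ≤ hh⁻¹ * (hh * (f (T α0) + δ/2 + ‖f‖ * (2 * ((2*L+1) * hh)))) :=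
          mul_le_mul_of_nonneg_left h9 (by positivity)
        have h12 : hh⁻¹ * (hh * (f (T α0) + δ/2 + ‖f‖ * (2 * ((2*L+1) * hh))))
            = f (T α0) + δ/2 + ‖f‖ * (2 * ((2*L+1) * hh)) := by
          field_simp
        rw [h10]
        linarith [h11, h12.le, h12.ge]
      have h15 := le_of_tendsto hmain hb
      linarith
    have h13 := hfu (T α0) hTα0S
    have h14 : f (G i t) ≤ f (T α0) := le_of_forall_pos_le_add hkey
    linarith
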